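/- Let n ≥ 2 and let A ∈ ℝ^{n×n} be symmetric. Then A satisfies condition (M) for the Lorentz cone L if and only if there exist a, λ ∈ ℝ with λ ≥ a such that A = diag(a, λ I_{n−1}), i.e., A is the diagonal matrix with (1,1)-entry a and all other diagonal entries equal to λ. -/

import Mathlib

open Matrix RealInnerProductSpace

/-- The Lorentz cone `L = {x ∈ ℝ^{n+1} : x₁ ≥ √(x₂² + ⋯ + x_{n+1}²)}`. -/
def lorentzCone (n : ℕ) : Set (EuclideanSpace ℝ (Fin (n + 1))) :=
  {x | Real.sqrt (∑ i : Fin n, x i.succ ^ 2) ≤ x 0}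


/-- Condition (M): `⟨Ax,x⟩ ≥ ⟨Ay,y⟩` for all `x ∈ 𝕊` and `y ∈ K ∩ 𝕊` with `x ⊥ y`. -/
def CondM {n : ℕ} (A : Matrix (Fin n) (Fin n) ℝ) (K : Set (EuclideanSpace ℝ (Fin n))) : Prop :=
  ∀ x y : EuclideanSpace ℝ (Fin n), ‖x‖ = 1 → y ∈ K → ‖y‖ = 1 → ⟪x, y⟫ = 0 →
    ⟪Matrix.toEuclideanLin A y, y⟫ ≤ ⟪Matrix.toEuclideanLin A x, x⟫

section helpers
noncomputable def E (m : ℕ) (i : Fin m) : EuclideanSpace ℝ (Fin m) := EuclideanSpace.single i 1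

lemma inner_toLin_E {m : ℕ} (A : Matrix (Fin m) (Fin m) ℝ) (i j : Fin m) :
    ⟪(Matrix.toEuclideanLin A) (E m j), E m i⟫ = A i j := by
  simp [E, Matrix.toEuclideanLin_apply, EuclideanSpace.inner_single_right, Matrix.mulVec_single]

lemma inner_E {m : ℕ} (i j : Fin m) : ⟪E m i, E m j⟫ = if i = j then 1 else 0 := by
  simp [E, EuclideanSpace.inner_single_left, EuclideanSpace.single_apply]

lemma q3 {m : ℕ} (A : Matrix (Fin m) (Fin m) ℝ) (i j k : Fin m)
    (c d e : ℝ) :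
    ⟪(Matrix.toEuclideanLin A) (c • E m i + d • E m j + e • E m k), c • E m i + d • E m j + e • E m k⟫
      = c^2*A i i + d^2*A j j + e^2*A k k + c*d*(A i j + A j i) + c*e*(A i k + A k i)
        + d*e*(A j k + A k j) := by
  simp only [map_add, _root_.map_smul, inner_add_left, inner_add_right, real_inner_smul_left,
    real_inner_smul_right, inner_toLin_E]
  ring

lemma q2 {m : ℕ} (A : Matrix (Fin m) (Fin m) ℝ) (i j : Fin m) (c d : ℝ) :
    ⟪(Matrix.toEuclideanLin A) (c • E m i + d • E m j), c • E m i + d • E m j⟫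
      = c^2*A i i + d^2*A j j + c*d*(A i j + A j i) := by
  simp only [map_add, _root_.map_smul, inner_add_left, inner_add_right, real_inner_smul_left,
    real_inner_smul_right, inner_toLin_E]
  ring

lemma inner3 {m : ℕ} (i j k : Fin m) (hij : i ≠ j) (hik : i ≠ k) (hjk : j ≠ k)
    (c d e c' d' e' : ℝ) :
    ⟪c • E m i + d • E m j + e • E m k, c' • E m i + d' • E m j + e' • E m k⟫
      = c*c' + d*d' + e*e' := by
  simp only [inner_add_left, inner_add_right, real_inner_smul_left, real_inner_smul_right, inner_E]
  simp [hij, hik, hjk, hij.symm, hik.symm, hjk.symm]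
  ring

lemma inner2 {m : ℕ} (i j : Fin m) (hij : i ≠ j) (c d c' d' : ℝ) :
    ⟪c • E m i + d • E m j, c' • E m i + d' • E m j⟫ = c*c' + d*d' := by
  simp only [inner_add_left, inner_add_right, real_inner_smul_left, real_inner_smul_right, inner_E]
  simp [hij, hij.symm]
  ring

lemma norm_one_of {m : ℕ} (x : EuclideanSpace ℝ (Fin m)) (h : ⟪x, x⟫ = (1:ℝ)) : ‖x‖ = 1 := by
  have h2 : ⟪x, x⟫ = ‖x‖^2 := real_inner_self_eq_norm_sq x
  nlinarith [norm_nonneg x]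

lemma inner_self_expand {m : ℕ} (x : EuclideanSpace ℝ (Fin (m+1))) :
    ⟪x, x⟫ = x 0 ^ 2 + ∑ i : Fin m, x i.succ ^ 2 := by
  rw [PiLp.inner_apply]; simp [RCLike.inner_apply, Fin.sum_univ_succ, sq]

lemma mem_lorentz {m : ℕ} (x : EuclideanSpace ℝ (Fin (m+1))) (h0 : 0 ≤ x 0)
    (h2 : ⟪x, x⟫ ≤ 2 * x 0 ^ 2) : x ∈ lorentzCone m := by
  have ht := inner_self_expand x
  show Real.sqrt (∑ i : Fin m, x i.succ ^ 2) ≤ x 0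
  calc Real.sqrt (∑ i : Fin m, x i.succ ^ 2) ≤ Real.sqrt (x 0 ^ 2) :=
        Real.sqrt_le_sqrt (by linarith)
    _ = x 0 := Real.sqrt_sq h0

lemma apply0_3 {m : ℕ} (i j : Fin (m+1)) (hi : i ≠ 0) (hj : j ≠ 0) (r c d : ℝ) :
    (r • E (m+1) 0 + c • E (m+1) i + d • E (m+1) j) 0 = r := by
  simp [E, EuclideanSpace.single_apply, (Ne.symm hi), (Ne.symm hj)]

lemma apply0_2 {m : ℕ} (j : Fin (m+1)) (hj : j ≠ 0) (r d : ℝ) :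
    (r • E (m+1) 0 + d • E (m+1) j) 0 = r := by
  simp [E, EuclideanSpace.single_apply, (Ne.symm hj)]

lemma cancel {P G : ℝ} (master : ∀ s t : ℝ, s^2 + t^2 = 1 → t*s*G ≤ t^2*P) : G = 0 := by
  by_contra hG
  have hGpos : 0 < |G| := abs_pos.mpr hG
  have hP0 : 0 ≤ P := by
    have h1 := master 0 1 (by norm_num)
    have h2 := master 0 (-1) (by norm_num)
    nlinarith
  set M : ℝ := P + 1 with hM
  have hMpos : 0 < M := by linarith
  set δ : ℝ := min (1/2 : ℝ) (|G| / (4*M)) with hδ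
  have hδpos : 0 < δ := lt_min (by norm_num) (by positivity)
  have hδle : δ ≤ 1/2 := min_le_left _ _
  have hδle2 : δ ≤ |G|/(4*M) := min_le_right _ _
  have h1δ : (0:ℝ) ≤ 1 - δ^2 := by nlinarith
  set s : ℝ := Real.sqrt (1 - δ^2) with hs
  have hs2 : s^2 = 1 - δ^2 := Real.sq_sqrt h1δ
  have hshalf : 1/2 ≤ s := by
    have h14 : ((1:ℝ)/2)^2 ≤ s^2 := by nlinarith
    nlinarith [Real.sqrt_nonneg (1 - δ^2)]
  have key : s * |G| ≤ δ * P := by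
    rcases lt_or_gt_of_ne hG with h | h
    · have hm := master s (-δ) (by nlinarith)
      rw [abs_of_neg h]
      nlinarith
    · have hm := master s δ (by nlinarith)
      rw [abs_of_pos h]
      nlinarith
  have hbound : δ * P ≤ |G|/4 := by
    calc δ * P ≤ (|G|/(4*M)) * P := mul_le_mul_of_nonneg_right hδle2 hP0
      _ ≤ |G|/4 := by
          rw [div_mul_eq_mul_div, div_le_div_iff₀ (by positivity) (by norm_num)]
          nlinarith
  nlinarith

lemma q_diag {m : ℕ} (d : Fin m → ℝ) (v : EuclideanSpace ℝ (Fin m)) :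
    ⟪(Matrix.toEuclideanLin (Matrix.diagonal d)) v, v⟫ = ∑ i, d i * (v i * v i) := by
  simp [Matrix.toEuclideanLin_apply, PiLp.inner_apply, RCLike.inner_apply,
    Matrix.mulVec_diagonal, mul_assoc]
  exact Finset.sum_congr rfl fun i _ => by ring

end helpers
set_option maxHeartbeats 1600000 in
/-- A symmetric matrix `A` satisfies condition (M) for the Lorentz cone iff
`A = diag(a, λ I)` for some `a ≤ λ`. (The ambient dimension is `n + 1 ≥ 2`.) -/
theorem quadratic_spherical_stmt16 (n : ℕ) (hn : 1 ≤ n)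
    (A : Matrix (Fin (n + 1)) (Fin (n + 1)) ℝ) (hA : A.IsSymm) :
    CondM A (lorentzCone n) ↔
      ∃ a lam : ℝ, a ≤ lam ∧
        A = Matrix.diagonal (fun i : Fin (n + 1) => if i = 0 then a else lam) := by

  constructor
  · intro h
    have hsym : ∀ i j : Fin (n+1), A j i = A i j := fun i j => hA.apply i j
    set c : ℝ := Real.sqrt 2 / 2 with hcdef
    have hcpos : 0 < c := by rw [hcdef]; positivity
    have hc2 : c^2 = 1/2 := by
      rw [hcdef, div_pow, Real.sq_sqrt (by norm_num : (0:ℝ) ≤ 2)]; norm_num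
    have hval1 : ((1 : Fin (n+1)) : ℕ) = 1 := by simp [Fin.val_one']; omega
    have one_ne : (1 : Fin (n+1)) ≠ 0 := by
      apply Fin.ne_of_val_ne; rw [hval1]; simp
    -- Step 1: first row/column off-diagonal entries vanish
    have step1 : ∀ j : Fin (n+1), j ≠ 0 → A 0 j = 0 := by
      intro j hj
      have h0j : (0 : Fin (n+1)) ≠ j := Ne.symm hj
      have hu : ∀ d e : ℝ, d*d + e*e = 1 → ‖d • E (n+1) 0 + e • E (n+1) j‖ = 1 := by
        intro d e hde
        exact norm_one_of _ (by rw [inner2 0 j h0j]; linarith)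
      have hm : ∀ e : ℝ, e*e ≤ c*c →
          (c • E (n+1) 0 + e • E (n+1) j) ∈ lorentzCone n := by
        intro e he
        refine mem_lorentz _ (by rw [apply0_2 j hj]; exact hcpos.le) ?_
        rw [apply0_2 j hj, inner2 0 j h0j]
        nlinarith
      have n1 : c*c + c*c = 1 := by linear_combination 2*hc2
      have n2 : c*c + (-c)*(-c) = 1 := by linear_combination 2*hc2
      have key1 := h (c • E (n+1) 0 + (-c) • E (n+1) j) (c • E (n+1) 0 + c • E (n+1) j)
        (hu c (-c) n2) (hm c (by nlinarith)) (hu c c n1)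
        (by rw [inner2 0 j h0j]; ring)
      have key2 := h (c • E (n+1) 0 + c • E (n+1) j) (c • E (n+1) 0 + (-c) • E (n+1) j)
        (hu c c n1) (hm (-c) (by nlinarith)) (hu c (-c) n2)
        (by rw [inner2 0 j h0j]; ring)
      rw [q2 A 0 j, q2 A 0 j] at key1 key2
      rw [hsym 0 j] at key1 key2
      have l1 : c^2*(A 0 j + A 0 j) ≤ 0 := by nlinarith [key1]
      have l2 : 0 ≤ c^2*(A 0 j + A 0 j) := by nlinarith [key2]
      rw [hc2] at l1 l2
      linarith
    -- Step 2: A 0 0 ≤ A j j for j ≠ 0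
    have step2 : ∀ j : Fin (n+1), j ≠ 0 → A 0 0 ≤ A j j := by
      intro j hj
      have h0j : (0 : Fin (n+1)) ≠ j := Ne.symm hj
      have key := h ((0:ℝ) • E (n+1) 0 + (1:ℝ) • E (n+1) j)
        ((1:ℝ) • E (n+1) 0 + (0:ℝ) • E (n+1) j)
        (norm_one_of _ (by rw [inner2 0 j h0j]; norm_num))
        (mem_lorentz _ (by rw [apply0_2 j hj]; norm_num)
          (by rw [apply0_2 j hj, inner2 0 j h0j]; norm_num))
        (norm_one_of _ (by rw [inner2 0 j h0j]; norm_num))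
        (by rw [inner2 0 j h0j]; ring)
      rw [q2 A 0 j, q2 A 0 j] at key
      nlinarith [key]
    -- Step 3: off-diagonal entries among space indices vanish
    have step3 : ∀ k l : Fin (n+1), k ≠ 0 → l ≠ 0 → k ≠ l → A k l = 0 := by
      intro k l hk hl hkl
      have h0k : (0 : Fin (n+1)) ≠ k := Ne.symm hk
      have h0l : (0 : Fin (n+1)) ≠ l := Ne.symm hl
      have z1 : A 0 k = 0 := step1 k hk
      have z2 : A k 0 = 0 := (hsym 0 k).trans z1
      have z3 : A 0 l = 0 := step1 l hl
      have z4 : A l 0 = 0 := (hsym 0 l).trans z3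
      have master : ∀ s t : ℝ, s^2 + t^2 = 1 →
          t*s*(2*c*A k l) ≤ t^2*(A k k - (A 0 0 + A l l)/2) := by
        intro s t hst
        have hs2 : s^2 = 1 - t^2 := by linarith
        have hxx : ⟪((c*s) • E (n+1) 0 + t • E (n+1) k + (-(c*s)) • E (n+1) l),
            ((c*s) • E (n+1) 0 + t • E (n+1) k + (-(c*s)) • E (n+1) l)⟫ = (1:ℝ) := by
          rw [inner3 0 k l h0k h0l hkl]
          linear_combination (2*s^2)*hc2 + hst
        have hyy : ⟪(c • E (n+1) 0 + (0:ℝ) • E (n+1) k + c • E (n+1) l),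
            (c • E (n+1) 0 + (0:ℝ) • E (n+1) k + c • E (n+1) l)⟫ = (1:ℝ) := by
          rw [inner3 0 k l h0k h0l hkl]
          linear_combination 2*hc2
        have key := h ((c*s) • E (n+1) 0 + t • E (n+1) k + (-(c*s)) • E (n+1) l)
          (c • E (n+1) 0 + (0:ℝ) • E (n+1) k + c • E (n+1) l)
          (norm_one_of _ hxx)
          (mem_lorentz _ (by rw [apply0_3 k l hk hl]; exact hcpos.le)
            (by rw [apply0_3 k l hk hl, hyy]; linarith [hc2]))
          (norm_one_of _ hyy)
          (by rw [inner3 0 k l h0k h0l hkl]; ring)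
        rw [q3 A 0 k l, q3 A 0 k l] at key
        rw [z1, z2, z3, z4, hsym k l] at key
        have hcs : (c*s)^2 = (1-t^2)/2 := by rw [mul_pow, hc2]; linarith
        rw [neg_sq, hcs, hc2] at key
        linarith [key]
      have h2 := cancel master
      rcases mul_eq_zero.mp h2 with h3 | h3
      · nlinarith
      · exact h3
    -- Step 4: diagonal space entries coincide
    have step4 : ∀ k l : Fin (n+1), k ≠ 0 → l ≠ 0 → k ≠ l → A k k = A l l := by
      intro k l hk hl hkl
      have h0k : (0 : Fin (n+1)) ≠ k := Ne.symm hk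
      have h0l : (0 : Fin (n+1)) ≠ l := Ne.symm hl
      have z1 : A 0 k = 0 := step1 k hk
      have z2 : A k 0 = 0 := (hsym 0 k).trans z1
      have z3 : A 0 l = 0 := step1 l hl
      have z4 : A l 0 = 0 := (hsym 0 l).trans z3
      have z5 : A k l = 0 := step3 k l hk hl hkl
      have z6 : A l k = 0 := (hsym k l).trans z5
      have hc4 : (c^2)^2 = 1/4 := by rw [hc2]; norm_num
      have master : ∀ s t : ℝ, s^2 + t^2 = 1 →
          t*s*(c*(A k k - A l l)) ≤ t^2*((A k k + A l l)/4 - A 0 0/2) := by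
        intro s t hst
        have hs2 : s^2 = 1 - t^2 := by linarith
        have hxx : ⟪((c*s) • E (n+1) 0 + (t*c - c^2*s) • E (n+1) k + (t*c + c^2*s) • E (n+1) l),
            ((c*s) • E (n+1) 0 + (t*c - c^2*s) • E (n+1) k + (t*c + c^2*s) • E (n+1) l)⟫ = (1:ℝ) := by
          rw [inner3 0 k l h0k h0l hkl]
          linear_combination (s^2 + 2*t^2 + 2*s^2*(c^2+1/2))*hc2 + hst
        have hyy : ⟪(c • E (n+1) 0 + (c^2) • E (n+1) k + (-(c^2)) • E (n+1) l),
            (c • E (n+1) 0 + (c^2) • E (n+1) k + (-(c^2)) • E (n+1) l)⟫ = (1:ℝ) := by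
          rw [inner3 0 k l h0k h0l hkl]
          linear_combination (2*c^2+2)*hc2
        have key := h ((c*s) • E (n+1) 0 + (t*c - c^2*s) • E (n+1) k + (t*c + c^2*s) • E (n+1) l)
          (c • E (n+1) 0 + (c^2) • E (n+1) k + (-(c^2)) • E (n+1) l)
          (norm_one_of _ hxx)
          (mem_lorentz _ (by rw [apply0_3 k l hk hl]; exact hcpos.le)
            (by rw [apply0_3 k l hk hl, hyy]; linarith [hc2]))
          (norm_one_of _ hyy)
          (by rw [inner3 0 k l h0k h0l hkl]; linear_combination (-2*s*c^2)*hc2)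
        rw [q3 A 0 k l, q3 A 0 k l] at key
        rw [z1, z2, z3, z4, z5, z6] at key
        have hcs : (c*s)^2 = (1-t^2)/2 := by rw [mul_pow, hc2]; linarith
        have e1 : (t*c - c^2*s)^2 = t^2/2 - t*s*c + s^2/4 := by
          linear_combination (t^2 - 2*t*s*c + s^2*(c^2 + 1/2))*hc2
        have e2 : (t*c + c^2*s)^2 = t^2/2 + t*s*c + s^2/4 := by
          linear_combination (t^2 + 2*t*s*c + s^2*(c^2 + 1/2))*hc2
        rw [neg_sq, hcs, hc4, e1, e2, hc2, hs2] at key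
        linarith [key]
      have h2 := cancel master
      rcases mul_eq_zero.mp h2 with h3 | h3
      · exact absurd h3 (ne_of_gt hcpos)
      · linarith
    refine ⟨A 0 0, A 1 1, step2 1 one_ne, ?_⟩
    ext i j
    by_cases hij : i = j
    · subst hij
      rw [Matrix.diagonal_apply_eq]
      by_cases hi : i = 0
      · subst hi; simp
      · rw [if_neg hi]
        by_cases hi1 : i = 1
        · rw [hi1]
        · exact step4 i 1 hi one_ne hi1
    · rw [Matrix.diagonal_apply_ne _ hij]
      by_cases hi : i = 0
      · subst hi
        exact step1 j (fun hj0 => hij (hj0 ▸ rfl))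
      · by_cases hj : j = 0
        · subst hj
          exact (hsym 0 i).trans (step1 i hi)
        · exact step3 i j hi hj hij
  · rintro ⟨a, lam, hal, rfl⟩
    intro x y hx hyK hy hxy
    have expand : ∀ v : EuclideanSpace ℝ (Fin (n+1)),
        (∑ i, (if i = 0 then a else lam) * (v i * v i))
          = a * (v 0)^2 + lam * ∑ i : Fin n, (v i.succ)^2 := by
      intro v
      rw [Fin.sum_univ_succ]
      simp [Fin.succ_ne_zero, sq, Finset.mul_sum]
    rw [q_diag, q_diag, expand, expand]
    set X := x 0 with hX
    set Y := y 0 with hY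
    set Sx := ∑ i : Fin n, (x i.succ)^2 with hSx
    set Sy := ∑ i : Fin n, (y i.succ)^2 with hSy
    have hSx0 : 0 ≤ Sx := Finset.sum_nonneg fun _ _ => sq_nonneg _
    have hSy0 : 0 ≤ Sy := Finset.sum_nonneg fun _ _ => sq_nonneg _
    have hx1 : X^2 + Sx = 1 := by
      have := inner_self_expand x
      rw [real_inner_self_eq_norm_sq, hx] at this
      simpa using this.symm
    have hy1 : Y^2 + Sy = 1 := by
      have := inner_self_expand y
      rw [real_inner_self_eq_norm_sq, hy] at this
      simpa using this.symm
    set T := ∑ i : Fin n, x i.succ * y i.succ with hT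
    have horth : X * Y + T = 0 := by
      have : (∑ i : Fin (n+1), x i * y i) = 0 := by
        rw [← hxy]; simp [PiLp.inner_apply, RCLike.inner_apply]
        exact Finset.sum_congr rfl fun i _ => mul_comm _ _
      rwa [Fin.sum_univ_succ] at this
    have hCS : T^2 ≤ Sx * Sy :=
      Finset.sum_mul_sq_le_sq_mul_sq Finset.univ (fun i : Fin n => x i.succ) (fun i : Fin n => y i.succ)
    have hcone : Real.sqrt Sy ≤ Y := hyK
    have hY0 : 0 ≤ Y := le_trans (Real.sqrt_nonneg _) hcone
    have hSyY : Sy ≤ Y^2 := by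
      nlinarith [Real.sq_sqrt hSy0, Real.sqrt_nonneg Sy]
    have hYhalf : 1/2 ≤ Y^2 := by nlinarith
    have hT2 : T^2 = X^2 * Y^2 := by
      have hTv : T = -(X*Y) := by linarith
      rw [hTv]; ring
    have hXhalf : X^2 ≤ 1/2 := by
      nlinarith [hCS, hT2, hYhalf, hSx0, hSy0, hSyY, hx1, hy1, sq_nonneg X, sq_nonneg Y]
    have hSxe : Sx = 1 - X^2 := by linarith
    have hSye : Sy = 1 - Y^2 := by linarith
    rw [hSxe, hSye]
    nlinarith [mul_nonneg (sub_nonneg.mpr hal) (sub_nonneg.mpr (le_trans hXhalf hYhalf))]
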